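/- arXiv:1702.07201 — 2 statements merged into one kernel-verified Lean document; each statement's English description precedes it below -/
import Mathlib

section
/- (Almost orthogonality on ℝ.) Suppose ψ and φ are C¹ functions on ℝ satisfying, for some C₀ > 0 and all u ∈ ℝ: ∫_ℝ ψ(u) du = 0 and ∫_ℝ φ(u) du = 0, |ψ(u)|, |φ(u)| ≤ C₀ (1 + |u|)^{−3}, and |ψ'(u)|, |φ'(u)| ≤ C₀ (1 + |u|)^{−3}. Then there is a constant C > 0 such that for all k, k' ∈ ℤ and all t ∈ ℝ, |(ψ_k ∗ φ_{k'})(t)| ≤ C · 2^{−|k−k'|} · 2^{−(k∧k')} / (2^{−(k∧k')} + |t|)², where ψ_k(u) := 2^k ψ(2^k u), φ_{k'}(u) := 2^{k'} φ(2^{k'} u), ∗ is the usual convolution on ℝ, and k∧k' = min(k,k'). -/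
set_option maxHeartbeats 1000000
open MeasureTheory

noncomputable def I2 : ℝ := ∫ u : ℝ, ((1 + |u|) ^ 2)⁻¹
noncomputable def I3 : ℝ := ∫ u : ℝ, ((1 + |u|) ^ 3)⁻¹

lemma intdecay (n : ℕ) (hn : 1 < (n : ℝ)) :
    Integrable (fun u : ℝ => ((1 + |u|) ^ n)⁻¹) := by
  have h := integrable_one_add_norm (E := ℝ) (μ := volume) (r := n) (by simpa using hn)
  refine h.congr (Filter.Eventually.of_forall fun u => ?_)
  simp only [Real.norm_eq_abs]
  rw [Real.rpow_neg (by positivity), Real.rpow_natCast]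

lemma I2nonneg : 0 ≤ I2 := integral_nonneg fun u => by positivity
lemma I3nonneg : 0 ≤ I3 := integral_nonneg fun u => by positivity

/-- Integrability of a function dominated by `C₀/(1+|u|)^3`. -/
lemma intdom (f : ℝ → ℝ) (hc : Continuous f) (C₀ : ℝ)
    (h0 : ∀ u : ℝ, |f u| ≤ C₀ / (1 + |u|) ^ 3) : Integrable f := by
  refine ((intdecay 3 (by norm_num)).const_mul C₀).mono' hc.aestronglyMeasurable
    (Filter.Eventually.of_forall fun u => ?_)
  rw [Real.norm_eq_abs]
  simpa [div_eq_mul_inv] using h0 u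

lemma abs_int_le (f : ℝ → ℝ) (hc : Continuous f) (C₀ : ℝ)
    (h0 : ∀ u : ℝ, |f u| ≤ C₀ / (1 + |u|) ^ 3) : (∫ u, |f u|) ≤ C₀ * I3 := by
  have : (∫ u : ℝ, C₀ * ((1 + |u|) ^ 3)⁻¹) = C₀ * I3 := by
    rw [integral_const_mul]; rfl
  rw [← this]
  refine integral_mono (intdom f hc C₀ h0).abs ((intdecay 3 (by norm_num)).const_mul C₀)
    fun u => ?_
  simpa [div_eq_mul_inv] using h0 u

/-- The key almost-orthogonality estimate at unit scale. -/
lemma key (ψ φ : ℝ → ℝ) (C₀ : ℝ) (hC₀ : 0 < C₀)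
    (hψsm : ContDiff ℝ 1 ψ) (hφc : Continuous φ)
    (hφint : (∫ u, φ u) = 0)
    (hψ0 : ∀ u : ℝ, |ψ u| ≤ C₀ / (1 + |u|) ^ 3)
    (hφ0 : ∀ u : ℝ, |φ u| ≤ C₀ / (1 + |u|) ^ 3)
    (hψ1 : ∀ u : ℝ, |deriv ψ u| ≤ C₀ / (1 + |u|) ^ 3)
    (lam : ℝ) (hlam : 1 ≤ lam) (s : ℝ) :
    |∫ w, ψ (s - w) * (lam * φ (lam * w))| ≤
      ((10 * I2 + 8 * I3) * C₀ ^ 2) * lam⁻¹ / (1 + |s|) ^ 2 := by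
  have hlam0 : 0 < lam := lt_of_lt_of_le one_pos hlam
  have hψc : Continuous ψ := hψsm.continuous
  have hψd : Differentiable ℝ ψ := hψsm.differentiable one_ne_zero
  set Φ : ℝ → ℝ := fun w => lam * φ (lam * w) with hΦ
  have hΦc : Continuous Φ := continuous_const.mul (hφc.comp (continuous_const.mul continuous_id))
  -- basic integrability
  have hφInt : Integrable φ := intdom φ hφc C₀ hφ0
  have hΦInt : Integrable Φ := (hφInt.comp_mul_left' hlam0.ne').const_mul lam
  have hΦint0 : (∫ w, Φ w) = 0 := by
    rw [hΦ]
    simp only [integral_const_mul]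
    rw [MeasureTheory.Measure.integral_comp_mul_left φ lam, hφint, smul_zero, mul_zero]
  -- pointwise bounds on Φ
  have hΦbd : ∀ w : ℝ, |Φ w| ≤ lam * C₀ * ((1 + lam * |w|) ^ 3)⁻¹ := by
    intro w
    have h1 : |Φ w| = lam * |φ (lam * w)| := by
      rw [hΦ, abs_mul, abs_of_pos hlam0]
    rw [h1]
    have := hφ0 (lam * w)
    rw [abs_mul, abs_of_pos hlam0] at this
    calc lam * |φ (lam * w)| ≤ lam * (C₀ / (1 + lam * |w|) ^ 3) := by
          exact mul_le_mul_of_nonneg_left this hlam0.le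
      _ = lam * C₀ * ((1 + lam * |w|) ^ 3)⁻¹ := by ring
  have hψbd : ∀ u : ℝ, |ψ u| ≤ C₀ := fun u =>
    (hψ0 u).trans (by
      rw [div_le_iff₀ (by positivity)]
      nlinarith [abs_nonneg u, sq_nonneg (|u|), pow_pos (by positivity : (0:ℝ) < 1 + |u|) 3,
        one_le_pow₀ (by simp [abs_nonneg u] : (1:ℝ) ≤ 1 + |u|) (n := 3)])
  -- main integrand and its integrability
  have hmainInt : Integrable (fun w => ψ (s - w) * Φ w) := by
    refine (hΦInt.abs.const_mul C₀).mono'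
      ((hψc.comp (continuous_const.sub continuous_id)).mul hΦc).aestronglyMeasurable
      (Filter.Eventually.of_forall fun w => ?_)
    rw [Real.norm_eq_abs, abs_mul]
    exact mul_le_mul_of_nonneg_right (hψbd _) (abs_nonneg _) |>.trans le_rfl
  have hdiffInt : Integrable (fun w => (ψ (s - w) - ψ s) * Φ w) := by
    have : (fun w => (ψ (s - w) - ψ s) * Φ w) =
        fun w => ψ (s - w) * Φ w - ψ s * Φ w := by funext w; ring
    rw [this]
    exact hmainInt.sub (hΦInt.const_mul (ψ s))
  -- cancellation
  have hcancel : (∫ w, ψ (s - w) * Φ w) = ∫ w, (ψ (s - w) - ψ s) * Φ w := by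
    have : (∫ w, (ψ (s - w) - ψ s) * Φ w) =
        (∫ w, ψ (s - w) * Φ w) - ∫ w, ψ s * Φ w := by
      rw [← integral_sub hmainInt (hΦInt.const_mul (ψ s))]
      congr 1; funext w; ring
    rw [this, integral_const_mul, hΦint0, mul_zero, sub_zero]
  rw [hcancel]
  -- notation
  set S : ℝ := 1 + |s| with hS
  have hS1 : (1:ℝ) ≤ S := by simp [hS, abs_nonneg]
  have hS0 : (0:ℝ) < S := lt_of_lt_of_le one_pos hS1
  set R : ℝ := S / 2 with hRdef
  have hR0 : 0 < R := by positivity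
  set A : Set ℝ := Set.Icc (-R) R with hAdef
  have hA : MeasurableSet A := measurableSet_Icc
  set D : ℝ → ℝ := fun w => (ψ (s - w) - ψ s) * Φ w with hD
  have hDInt : Integrable D := hdiffInt
  -- the scaled decay majorant
  set g2 : ℝ → ℝ := fun w => ((1 + lam * |w|) ^ 2)⁻¹ with hg2
  have hg2eq : ∀ w : ℝ, g2 w = ((1 + |lam * w|) ^ 2)⁻¹ := by
    intro w; rw [hg2, abs_mul, abs_of_pos hlam0]
  have hg2Int : Integrable g2 := by
    refine ((intdecay 2 (by norm_num)).comp_mul_left' hlam0.ne').congr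
      (Filter.Eventually.of_forall fun w => ?_)
    rw [hg2eq w]
  have hg2nonneg : ∀ w : ℝ, 0 ≤ g2 w := fun w => by rw [hg2]; positivity
  have hg2val : (∫ w, g2 w) = lam⁻¹ * I2 := by
    have h1 : (∫ w, g2 w) = ∫ w, (fun x => ((1 + |x|) ^ 2)⁻¹) (lam * w) := by
      congr 1; funext w; rw [hg2eq w]
    rw [h1, MeasureTheory.Measure.integral_comp_mul_left (fun x => ((1 + |x|) ^ 2)⁻¹) lam,
      smul_eq_mul, abs_of_pos (inv_pos.mpr hlam0)]
    rfl
  -- pointwise bound on region 1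
  have hpt1 : ∀ w ∈ A, |D w| ≤ 8 * C₀ ^ 2 * (S ^ 3)⁻¹ * g2 w := by
    intro w hw
    have hwR : |w| ≤ R := abs_le.mpr ⟨hw.1, hw.2⟩
    -- derivative bound on the segment
    have hder : ∀ x ∈ Set.uIcc (s - w) s, ‖deriv ψ x‖ ≤ 8 * C₀ * (S ^ 3)⁻¹ := by
      intro x hx
      have hxs : |x - s| ≤ |w| := by
        rcases Set.mem_uIcc.mp hx with h | h
        · rw [abs_sub_le_iff]
          exact ⟨by linarith [abs_nonneg w, h.2], by linarith [le_abs_self w, h.1]⟩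
        · rw [abs_sub_le_iff]
          exact ⟨by linarith [neg_le_abs w, h.2], by linarith [abs_nonneg w, h.1]⟩
      have hx1 : S / 2 ≤ 1 + |x| := by
        have h2 : |s| - |x| ≤ |s - x| := abs_sub_abs_le_abs_sub s x
        rw [abs_sub_comm] at h2
        have h4 : |s| - |x| ≤ R := le_trans (le_trans h2 hxs) hwR
        have h5 : R = S / 2 := hRdef
        have h6 : S = 1 + |s| := hS
        linarith
      have hcube : S ^ 3 ≤ 8 * (1 + |x|) ^ 3 := by
        have h3 : (S / 2) ^ 3 ≤ (1 + |x|) ^ 3 :=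
          pow_le_pow_left₀ (by positivity) hx1 3
        have h4 : S ^ 3 = 8 * (S / 2) ^ 3 := by ring
        rw [h4]
        exact mul_le_mul_of_nonneg_left h3 (by norm_num)
      have := hψ1 x
      rw [Real.norm_eq_abs]
      refine this.trans ?_
      rw [div_le_iff₀ (by positivity), show 8 * C₀ * (S ^ 3)⁻¹ * (1 + |x|) ^ 3
          = C₀ * ((8 * (1 + |x|) ^ 3) * (S ^ 3)⁻¹) by ring]
      nth_rewrite 1 [show C₀ = C₀ * 1 by ring]
      refine mul_le_mul_of_nonneg_left ?_ hC₀.le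
      rw [← div_eq_mul_inv, le_div_iff₀ (by positivity), one_mul]
      exact hcube
    have hmvt : |ψ (s - w) - ψ s| ≤ 8 * C₀ * (S ^ 3)⁻¹ * |w| := by
      have hconv : Convex ℝ (Set.uIcc (s - w) s) := convex_uIcc _ _
      have := hconv.norm_image_sub_le_of_norm_deriv_le
        (fun x _ => hψd x) hder Set.right_mem_uIcc Set.left_mem_uIcc
      rw [Real.norm_eq_abs, Real.norm_eq_abs] at this
      simpa [abs_sub_comm] using this
    have hfrac : lam * |w| * ((1 + lam * |w|) ^ 3)⁻¹ ≤ ((1 + lam * |w|) ^ 2)⁻¹ := by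
      set x := lam * |w| with hx
      have hx0 : 0 ≤ x := by positivity
      have h1x : (0:ℝ) < 1 + x := by linarith
      rw [show (1 + x) ^ 3 = (1 + x) ^ 2 * (1 + x) by ring, mul_inv]
      rw [show x * (((1 + x) ^ 2)⁻¹ * (1 + x)⁻¹) = ((1 + x) ^ 2)⁻¹ * (x * (1 + x)⁻¹) by ring]
      have : x * (1 + x)⁻¹ ≤ 1 := by
        rw [mul_inv_le_iff₀ h1x]; linarith
      calc ((1 + x) ^ 2)⁻¹ * (x * (1 + x)⁻¹) ≤ ((1 + x) ^ 2)⁻¹ * 1 := by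
            exact mul_le_mul_of_nonneg_left this (by positivity)
        _ = ((1 + x) ^ 2)⁻¹ := mul_one _
    rw [hD, abs_mul]
    calc |ψ (s - w) - ψ s| * |Φ w|
        ≤ (8 * C₀ * (S ^ 3)⁻¹ * |w|) * (lam * C₀ * ((1 + lam * |w|) ^ 3)⁻¹) := by
          exact mul_le_mul hmvt (hΦbd w) (abs_nonneg _) (by positivity)
      _ = (8 * C₀ ^ 2 * (S ^ 3)⁻¹) * (lam * |w| * ((1 + lam * |w|) ^ 3)⁻¹) := by ring
      _ ≤ (8 * C₀ ^ 2 * (S ^ 3)⁻¹) * ((1 + lam * |w|) ^ 2)⁻¹ := by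
          exact mul_le_mul_of_nonneg_left hfrac (by positivity)
      _ = 8 * C₀ ^ 2 * (S ^ 3)⁻¹ * g2 w := by rw [hg2]
  -- pointwise bound on region 2
  set K2 : ℝ := C₀ * (lam⁻¹ * lam⁻¹) * (8 * (S ^ 3)⁻¹) with hK2
  set K3 : ℝ := |ψ s| * (2 * C₀ * S⁻¹) with hK3
  have hK2nn : 0 ≤ K2 := by rw [hK2]; positivity
  have hK3nn : 0 ≤ K3 := by rw [hK3]; positivity
  have hpt2 : ∀ w ∈ Aᶜ, |D w| ≤ K2 * |ψ (s - w)| + K3 * g2 w := by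
    intro w hw
    have hRw : R < |w| := by
      simp only [hAdef, Set.mem_compl_iff, Set.mem_Icc, not_and_or, not_le] at hw
      rcases hw with h | h
      · exact lt_of_lt_of_le (by linarith) (neg_le_abs w)
      · exact lt_of_lt_of_le h (le_abs_self w)
    have hlamRw : lam * R < lam * |w| := by
      exact mul_lt_mul_of_pos_left hRw hlam0
    have hlamR0 : (0:ℝ) < lam * R := by positivity
    -- bound |Φ w| ≤ C₀ * lam⁻¹ * lam⁻¹ * 8 * S⁻³  (term A form)
    have hΦsmallA : |Φ w| ≤ K2 := by
      have h1 : |Φ w| ≤ lam * C₀ * ((1 + lam * |w|) ^ 3)⁻¹ := hΦbd w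
      have h2 : ((1 + lam * |w|) ^ 3)⁻¹ ≤ ((lam * R) ^ 3)⁻¹ := by
        apply inv_anti₀ (by positivity)
        apply pow_le_pow_left₀ hlamR0.le (by linarith) 3
      have h3 : lam * C₀ * ((lam * R) ^ 3)⁻¹ = K2 := by
        rw [hK2, hRdef]
        field_simp
        ring
      calc |Φ w| ≤ lam * C₀ * ((1 + lam * |w|) ^ 3)⁻¹ := h1
        _ ≤ lam * C₀ * ((lam * R) ^ 3)⁻¹ := by
            exact mul_le_mul_of_nonneg_left h2 (by positivity)
        _ = K2 := h3
    -- bound |Φ w| ≤ 2 C₀ S⁻¹ g2 w  (term B form)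
    have hΦsmallB : |Φ w| ≤ 2 * C₀ * S⁻¹ * g2 w := by
      have h1 : |Φ w| ≤ lam * C₀ * ((1 + lam * |w|) ^ 3)⁻¹ := hΦbd w
      have h2 : ((1 + lam * |w|) ^ 3)⁻¹ = (1 + lam * |w|)⁻¹ * g2 w := by
        rw [hg2, show (1 + lam * |w|) ^ 3 = (1 + lam * |w|) * (1 + lam * |w|) ^ 2 by ring,
          mul_inv]
      have h3 : (1 + lam * |w|)⁻¹ ≤ (lam * R)⁻¹ := by
        apply inv_anti₀ hlamR0
        linarith
      calc |Φ w| ≤ lam * C₀ * ((1 + lam * |w|) ^ 3)⁻¹ := h1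
        _ = lam * C₀ * ((1 + lam * |w|)⁻¹ * g2 w) := by rw [h2]
        _ ≤ lam * C₀ * ((lam * R)⁻¹ * g2 w) := by
            refine mul_le_mul_of_nonneg_left ?_ (by positivity)
            exact mul_le_mul_of_nonneg_right h3 (hg2nonneg w)
        _ = 2 * C₀ * S⁻¹ * g2 w := by
            rw [hRdef]; field_simp
    rw [hD, abs_mul]
    calc |ψ (s - w) - ψ s| * |Φ w| ≤ (|ψ (s - w)| + |ψ s|) * |Φ w| := by
          exact mul_le_mul_of_nonneg_right (abs_sub _ _) (abs_nonneg _)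
      _ = |ψ (s - w)| * |Φ w| + |ψ s| * |Φ w| := by ring
      _ ≤ |ψ (s - w)| * K2 + |ψ s| * (2 * C₀ * S⁻¹ * g2 w) := by
          refine add_le_add ?_ ?_
          · exact mul_le_mul_of_nonneg_left hΦsmallA (abs_nonneg _)
          · exact mul_le_mul_of_nonneg_left hΦsmallB (abs_nonneg _)
      _ = K2 * |ψ (s - w)| + K3 * g2 w := by rw [hK3]; ring
  -- integrability of shifted |ψ|
  have hψInt : Integrable ψ := intdom ψ hψc C₀ hψ0
  have hψshiftInt : Integrable (fun w => |ψ (s - w)|) := (hψInt.comp_sub_left s).abs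
  have hψshiftval : (∫ w, |ψ (s - w)|) = ∫ u, |ψ u| := by
    exact integral_sub_left_eq_self (fun u => |ψ u|) volume s
  have hψabsle : (∫ u, |ψ u|) ≤ C₀ * I3 := abs_int_le ψ hψc C₀ hψ0
  have hψabsnn : 0 ≤ ∫ u, |ψ u| := integral_nonneg fun u => abs_nonneg _
  -- majorant for region 2
  set M2 : ℝ → ℝ := fun w => K2 * |ψ (s - w)| + K3 * g2 w with hM2
  have hM2Int : Integrable M2 := (hψshiftInt.const_mul K2).add (hg2Int.const_mul K3)
  have hM2nn : ∀ w, 0 ≤ M2 w := fun w => by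
    rw [hM2]
    have := hg2nonneg w
    positivity
  -- majorant for region 1
  set M1 : ℝ → ℝ := fun w => 8 * C₀ ^ 2 * (S ^ 3)⁻¹ * g2 w with hM1
  have hM1Int : Integrable M1 := hg2Int.const_mul _
  have hM1nn : ∀ w, 0 ≤ M1 w := fun w => by
    rw [hM1]; have := hg2nonneg w; positivity
  -- put everything together
  have hsplit : (∫ w, |D w|) = (∫ w in A, |D w|) + ∫ w in Aᶜ, |D w| :=
    (integral_add_compl hA hDInt.abs).symm
  have hbd1 : (∫ w in A, |D w|) ≤ 8 * C₀ ^ 2 * (S ^ 3)⁻¹ * (lam⁻¹ * I2) := by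
    calc (∫ w in A, |D w|) ≤ ∫ w in A, M1 w := by
          refine setIntegral_mono_on hDInt.abs.integrableOn hM1Int.integrableOn hA ?_
          intro w hw; exact hpt1 w hw
      _ ≤ ∫ w, M1 w := setIntegral_le_integral hM1Int
            (Filter.Eventually.of_forall hM1nn)
      _ = 8 * C₀ ^ 2 * (S ^ 3)⁻¹ * ∫ w, g2 w := by
          rw [hM1, integral_const_mul]
      _ = 8 * C₀ ^ 2 * (S ^ 3)⁻¹ * (lam⁻¹ * I2) := by rw [hg2val]
  have hbd2 : (∫ w in Aᶜ, |D w|) ≤ K2 * (C₀ * I3) + K3 * (lam⁻¹ * I2) := by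
    calc (∫ w in Aᶜ, |D w|) ≤ ∫ w in Aᶜ, M2 w := by
          refine setIntegral_mono_on hDInt.abs.integrableOn hM2Int.integrableOn hA.compl ?_
          intro w hw; exact hpt2 w hw
      _ ≤ ∫ w, M2 w := setIntegral_le_integral hM2Int
            (Filter.Eventually.of_forall hM2nn)
      _ = K2 * (∫ w, |ψ (s - w)|) + K3 * ∫ w, g2 w := by
          rw [hM2, integral_add (hψshiftInt.const_mul K2) (hg2Int.const_mul K3),
            integral_const_mul, integral_const_mul]
      _ = K2 * (∫ u, |ψ u|) + K3 * (lam⁻¹ * I2) := by rw [hψshiftval, hg2val]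
      _ ≤ K2 * (C₀ * I3) + K3 * (lam⁻¹ * I2) := by
          exact add_le_add (mul_le_mul_of_nonneg_left hψabsle hK2nn) le_rfl
  have habs : |∫ w, D w| ≤ ∫ w, |D w| := by
    have := norm_integral_le_integral_norm D (μ := volume)
    simpa [Real.norm_eq_abs] using this
  -- final arithmetic
  have hSinv : (S ^ 3)⁻¹ ≤ (S ^ 2)⁻¹ := by
    apply inv_anti₀ (by positivity)
    calc S ^ 2 = S ^ 2 * 1 := (mul_one _).symm
      _ ≤ S ^ 2 * S := by exact mul_le_mul_of_nonneg_left hS1 (by positivity)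
      _ = S ^ 3 := by ring
  have hlaminv1 : lam⁻¹ ≤ 1 := by
    rw [inv_le_one_iff₀]; right; exact hlam
  have hlaminv0 : 0 < lam⁻¹ := inv_pos.mpr hlam0
  have hψs : |ψ s| ≤ C₀ * (S ^ 3)⁻¹ := by
    have := hψ0 s
    rw [div_eq_mul_inv] at this
    exact this
  have hterm1 : 8 * C₀ ^ 2 * (S ^ 3)⁻¹ * (lam⁻¹ * I2) ≤
      8 * I2 * C₀ ^ 2 * lam⁻¹ * (S ^ 2)⁻¹ := by
    rw [show 8 * C₀ ^ 2 * (S ^ 3)⁻¹ * (lam⁻¹ * I2)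
        = I2 * (8 * C₀ ^ 2 * lam⁻¹ * (S ^ 3)⁻¹) by ring,
      show 8 * I2 * C₀ ^ 2 * lam⁻¹ * (S ^ 2)⁻¹
        = I2 * (8 * C₀ ^ 2 * lam⁻¹ * (S ^ 2)⁻¹) by ring]
    exact mul_le_mul_of_nonneg_left
      (mul_le_mul_of_nonneg_left hSinv (by positivity)) I2nonneg
  have hterm2 : K2 * (C₀ * I3) ≤ 8 * I3 * C₀ ^ 2 * lam⁻¹ * (S ^ 2)⁻¹ := by
    rw [hK2, show C₀ * (lam⁻¹ * lam⁻¹) * (8 * (S ^ 3)⁻¹) * (C₀ * I3)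
        = I3 * (8 * C₀ ^ 2 * (lam⁻¹ * lam⁻¹) * (S ^ 3)⁻¹) by ring,
      show 8 * I3 * C₀ ^ 2 * lam⁻¹ * (S ^ 2)⁻¹
        = I3 * (8 * C₀ ^ 2 * lam⁻¹ * (S ^ 2)⁻¹) by ring]
    refine mul_le_mul_of_nonneg_left ?_ I3nonneg
    have h1 : lam⁻¹ * lam⁻¹ ≤ lam⁻¹ := by nlinarith [hlaminv1, hlaminv0.le]
    gcongr 8 * C₀ ^ 2 * ?_ * ?_
    all_goals first | exact h1 | exact hSinv
  have hterm3 : K3 * (lam⁻¹ * I2) ≤ 2 * I2 * C₀ ^ 2 * lam⁻¹ * (S ^ 2)⁻¹ := by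
    rw [hK3]
    have hstep : |ψ s| * (2 * C₀ * S⁻¹) ≤ 2 * C₀ ^ 2 * (S ^ 3)⁻¹ * S⁻¹ := by
      rw [show 2 * C₀ ^ 2 * (S ^ 3)⁻¹ * S⁻¹ = (C₀ * (S ^ 3)⁻¹) * (2 * C₀ * S⁻¹) by ring]
      exact mul_le_mul_of_nonneg_right hψs (by positivity)
    have hS4 : (S ^ 3)⁻¹ * S⁻¹ ≤ (S ^ 2)⁻¹ := by
      rw [← mul_inv, ← pow_succ]
      apply inv_anti₀ (by positivity)
      calc S ^ 2 = S ^ 2 * 1 * 1 := by ring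
        _ ≤ S ^ 2 * S * S := by
            refine mul_le_mul (mul_le_mul_of_nonneg_left hS1 (by positivity)) hS1
              zero_le_one (by positivity)
        _ = S ^ 4 := by ring
    have hnn : (0:ℝ) ≤ I2 * lam⁻¹ := mul_nonneg I2nonneg hlaminv0.le
    have hnn2 : (0:ℝ) ≤ I2 * lam⁻¹ * 2 * C₀ ^ 2 :=
      mul_nonneg (mul_nonneg hnn (by norm_num)) (by positivity)
    calc |ψ s| * (2 * C₀ * S⁻¹) * (lam⁻¹ * I2)
        = I2 * lam⁻¹ * (|ψ s| * (2 * C₀ * S⁻¹)) := by ring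
      _ ≤ I2 * lam⁻¹ * (2 * C₀ ^ 2 * (S ^ 3)⁻¹ * S⁻¹) :=
          mul_le_mul_of_nonneg_left hstep hnn
      _ = I2 * lam⁻¹ * 2 * C₀ ^ 2 * ((S ^ 3)⁻¹ * S⁻¹) := by ring
      _ ≤ I2 * lam⁻¹ * 2 * C₀ ^ 2 * (S ^ 2)⁻¹ :=
          mul_le_mul_of_nonneg_left hS4 hnn2
      _ = 2 * I2 * C₀ ^ 2 * lam⁻¹ * (S ^ 2)⁻¹ := by ring
  calc |∫ w, D w| ≤ ∫ w, |D w| := habs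
    _ = (∫ w in A, |D w|) + ∫ w in Aᶜ, |D w| := hsplit
    _ ≤ 8 * C₀ ^ 2 * (S ^ 3)⁻¹ * (lam⁻¹ * I2) + (K2 * (C₀ * I3) + K3 * (lam⁻¹ * I2)) :=
        add_le_add hbd1 hbd2
    _ ≤ 8 * I2 * C₀ ^ 2 * lam⁻¹ * (S ^ 2)⁻¹ + (8 * I3 * C₀ ^ 2 * lam⁻¹ * (S ^ 2)⁻¹
        + 2 * I2 * C₀ ^ 2 * lam⁻¹ * (S ^ 2)⁻¹) :=
        add_le_add hterm1 (add_le_add hterm2 hterm3)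
    _ = (10 * I2 + 8 * I3) * C₀ ^ 2 * lam⁻¹ * (S ^ 2)⁻¹ := by ring
    _ = (10 * I2 + 8 * I3) * C₀ ^ 2 * lam⁻¹ / (1 + |s|) ^ 2 := by
        rw [div_eq_mul_inv, hS]

lemma scale (f g : ℝ → ℝ) (a lam t : ℝ) (ha : 0 < a) :
    (∫ u, (a * f (a * (t - u))) * ((lam * a) * g ((lam * a) * u))) =
      a * ∫ w, f (a * t - w) * (lam * g (lam * w)) := by
  have h1 : ∀ u : ℝ, (a * f (a * (t - u))) * ((lam * a) * g ((lam * a) * u))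
      = (a * a) * ((fun w => f (a * t - w) * (lam * g (lam * w))) (a * u)) := by
    intro u
    simp only
    rw [show a * (t - u) = a * t - a * u by ring, show lam * (a * u) = (lam * a) * u by ring]
    ring
  calc (∫ u, (a * f (a * (t - u))) * ((lam * a) * g ((lam * a) * u)))
      = ∫ u, (a * a) * ((fun w => f (a * t - w) * (lam * g (lam * w))) (a * u)) := by
        congr 1; funext u; exact h1 u
    _ = (a * a) * ∫ u, (fun w => f (a * t - w) * (lam * g (lam * w))) (a * u) :=
        integral_const_mul _ _
    _ = (a * a) * (|a⁻¹| • ∫ w, f (a * t - w) * (lam * g (lam * w))) := by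
        rw [MeasureTheory.Measure.integral_comp_mul_left
          (fun w => f (a * t - w) * (lam * g (lam * w))) a]
    _ = a * ∫ w, f (a * t - w) * (lam * g (lam * w)) := by
        rw [smul_eq_mul, abs_of_pos (inv_pos.mpr ha)]
        rw [← mul_assoc, mul_assoc a a, mul_inv_cancel₀ ha.ne', mul_one]

/-- The dyadic estimate for one ordering of the scales. -/
lemma half (f g : ℝ → ℝ) (C₀ : ℝ) (hC₀ : 0 < C₀)
    (hfsm : ContDiff ℝ 1 f) (hgc : Continuous g)
    (hgint : (∫ u, g u) = 0)
    (hf0 : ∀ u : ℝ, |f u| ≤ C₀ / (1 + |u|) ^ 3)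
    (hg0 : ∀ u : ℝ, |g u| ≤ C₀ / (1 + |u|) ^ 3)
    (hf1 : ∀ u : ℝ, |deriv f u| ≤ C₀ / (1 + |u|) ^ 3)
    (m n : ℤ) (hmn : m ≤ n) (t : ℝ) :
    |∫ u, ((2:ℝ) ^ m * f ((2:ℝ) ^ m * (t - u))) * ((2:ℝ) ^ n * g ((2:ℝ) ^ n * u))| ≤
      ((10 * I2 + 8 * I3) * C₀ ^ 2) * ((2:ℝ) ^ (n - m))⁻¹ *
        ((2:ℝ) ^ (-m) / ((2:ℝ) ^ (-m) + |t|) ^ 2) := by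
  set a : ℝ := (2:ℝ) ^ m with ha'
  set lam : ℝ := (2:ℝ) ^ (n - m) with hlam'
  have ha : 0 < a := zpow_pos two_pos m
  have hlam1 : (1:ℝ) ≤ lam := one_le_zpow₀ one_le_two (by omega)
  have hlam0 : (0:ℝ) < lam := lt_of_lt_of_le one_pos hlam1
  have hb : lam * a = (2:ℝ) ^ n := by
    rw [hlam', ha', ← zpow_add₀ (two_ne_zero)]
    congr 1; ring
  have hrw : (∫ u, ((2:ℝ) ^ m * f ((2:ℝ) ^ m * (t - u))) * ((2:ℝ) ^ n * g ((2:ℝ) ^ n * u)))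
      = ∫ u, (a * f (a * (t - u))) * ((lam * a) * g ((lam * a) * u)) := by
    rw [hb]
  rw [hrw, scale f g a lam t ha, abs_mul, abs_of_pos ha]
  have hkey := key f g C₀ hC₀ hfsm hgc hgint hf0 hg0 hf1 lam hlam1 (a * t)
  set K : ℝ := (10 * I2 + 8 * I3) * C₀ ^ 2 with hK
  have hat : |a * t| = a * |t| := by rw [abs_mul, abs_of_pos ha]
  have hfrac : (2:ℝ) ^ (-m) / ((2:ℝ) ^ (-m) + |t|) ^ 2 = a / (1 + a * |t|) ^ 2 := by
    rw [zpow_neg, ← ha']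
    rw [show a⁻¹ + |t| = a⁻¹ * (1 + a * |t|) by field_simp]
    rw [mul_pow]
    rw [div_eq_div_iff (by positivity) (by positivity)]
    field_simp
  rw [hfrac]
  calc a * |∫ w, f (a * t - w) * (lam * g (lam * w))|
      ≤ a * (K * lam⁻¹ / (1 + |a * t|) ^ 2) := mul_le_mul_of_nonneg_left hkey ha.le
    _ = K * lam⁻¹ * (a / (1 + a * |t|) ^ 2) := by
        rw [hat]; ring

/-- Convolution on `ℝ`: `(f ∗ h)(t) = ∫ f(u) h(t − u) du`. -/
noncomputable def convR (f h : ℝ → ℝ) (t : ℝ) : ℝ := ∫ u, f u * h (t - u)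

theorem stmt7 (ψ φ : ℝ → ℝ) (C₀ : ℝ) (hC₀ : 0 < C₀)
    (hψsm : ContDiff ℝ 1 ψ) (hφsm : ContDiff ℝ 1 φ)
    (hψint : (∫ u, ψ u) = 0) (hφint : (∫ u, φ u) = 0)
    (hψ0 : ∀ u : ℝ, |ψ u| ≤ C₀ / (1 + |u|) ^ 3)
    (hφ0 : ∀ u : ℝ, |φ u| ≤ C₀ / (1 + |u|) ^ 3)
    (hψ1 : ∀ u : ℝ, |deriv ψ u| ≤ C₀ / (1 + |u|) ^ 3)
    (hφ1 : ∀ u : ℝ, |deriv φ u| ≤ C₀ / (1 + |u|) ^ 3) :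
    ∃ C : ℝ, 0 < C ∧ ∀ (k k' : ℤ) (t : ℝ),
      |convR (fun u => (2 : ℝ) ^ k * ψ ((2 : ℝ) ^ k * u))
          (fun u => (2 : ℝ) ^ k' * φ ((2 : ℝ) ^ k' * u)) t| ≤
        C * (2 : ℝ) ^ (-((k - k').natAbs : ℤ)) *
          ((2 : ℝ) ^ (-(min k k')) / ((2 : ℝ) ^ (-(min k k')) + |t|) ^ 2) := by
  set K : ℝ := (10 * I2 + 8 * I3) * C₀ ^ 2 with hK
  have hKnn : 0 ≤ K := by
    rw [hK]
    have h2 := I2nonneg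
    have h3 := I3nonneg
    have : (0:ℝ) ≤ 10 * I2 + 8 * I3 := by linarith
    positivity
  refine ⟨K + 1, by linarith, fun k k' t => ?_⟩
  have hfinal : ∀ x y : ℝ, 0 < x → 0 ≤ y → K * x * y ≤ (K + 1) * x * y := by
    intro x y hx hy
    have : K * x ≤ (K + 1) * x := mul_le_mul_of_nonneg_right (by linarith) hx.le
    exact mul_le_mul_of_nonneg_right this hy
  rcases le_total k k' with h | h
  · -- k ≤ k' : ψ lives at the coarse scale
    have hmin : min k k' = k := min_eq_left h
    have hnat : (-(((k - k').natAbs : ℤ))) = -(k' - k) := by omega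
    have hflip : convR (fun u => (2 : ℝ) ^ k * ψ ((2 : ℝ) ^ k * u))
        (fun u => (2 : ℝ) ^ k' * φ ((2 : ℝ) ^ k' * u)) t
        = ∫ u, ((2:ℝ) ^ k * ψ ((2:ℝ) ^ k * (t - u))) * ((2:ℝ) ^ k' * φ ((2:ℝ) ^ k' * u)) := by
      rw [convR]
      rw [← integral_sub_left_eq_self
        (fun u => (2 : ℝ) ^ k * ψ ((2 : ℝ) ^ k * u) * ((2 : ℝ) ^ k' * φ ((2 : ℝ) ^ k' * (t - u))))
        volume t]
      congr 1; funext u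
      simp only [sub_sub_cancel]
    rw [hflip, hmin, hnat, zpow_neg]
    have hhalf := half ψ φ C₀ hC₀ hψsm hφsm.continuous hφint hψ0 hφ0 hψ1 k k' h t
    refine hhalf.trans (hfinal _ _ ?_ ?_)
    · exact inv_pos.mpr (zpow_pos two_pos _)
    · positivity
  · -- k' ≤ k : φ lives at the coarse scale
    have hmin : min k k' = k' := min_eq_right h
    have hnat : (-(((k - k').natAbs : ℤ))) = -(k - k') := by omega
    have hcomm : convR (fun u => (2 : ℝ) ^ k * ψ ((2 : ℝ) ^ k * u))
        (fun u => (2 : ℝ) ^ k' * φ ((2 : ℝ) ^ k' * u)) t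
        = ∫ u, ((2:ℝ) ^ k' * φ ((2:ℝ) ^ k' * (t - u))) * ((2:ℝ) ^ k * ψ ((2:ℝ) ^ k * u)) := by
      rw [convR]
      congr 1; funext u
      ring
    rw [hcomm, hmin, hnat, zpow_neg]
    have hhalf := half φ ψ C₀ hC₀ hφsm hψsm.continuous hψint hφ0 hψ0 hφ1 k' k h t
    refine hhalf.trans (hfinal _ _ ?_ ?_)
    · exact inv_pos.mpr (zpow_pos two_pos _)
    · positivity
end

section
/- For every integer n ≥ 1 there is a constant C > 0 such that for all real numbers A, B > 0 with B ≤ A², all z ∈ ℝ^{2n} and all t ∈ ℝ: ∫_ℝ [A / (A² + |z|² + |t−u|)^{n + 3/2}] · [B / (B + |u|)²] du ≤ C · [A^{1/2} / (A + |z|)^{2n + 1/2}] · [A^{1/2} / (A + |t|^{1/2})^{5/2}]. -/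
open MeasureTheory Set Real

lemma key_int (c p : ℝ) (hc : 0 < c) (hp : 1 < p) :
    Integrable (fun u : ℝ => (c + |u|) ^ (-p)) ∧
    ∫ u : ℝ, (c + |u|) ^ (-p) = 2 * (c ^ (1 - p) / (p - 1)) := by
  constructor
  · have h1 : Integrable (fun x : ℝ => (1 + ‖x‖) ^ (-p)) := by
      apply integrable_one_add_norm
      simp only [Module.finrank_self, Nat.cast_one]
      linarith
    have h2 : Integrable (fun x : ℝ => c ^ (-p) * (1 + ‖x / c‖) ^ (-p)) :=
      (h1.comp_div hc.ne').const_mul _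
    refine h2.congr ?_
    filter_upwards with x
    have hcx : (0:ℝ) < c + |x| := by positivity
    rw [Real.norm_eq_abs, abs_div, abs_of_pos hc]
    have : 1 + |x| / c = (c + |x|) / c := by field_simp
    rw [this, Real.div_rpow hcx.le hc.le]
    have hne : c ^ (-p) ≠ 0 := by positivity
    rw [mul_comm, div_mul_cancel₀ _ hne]
  · have h0 : (fun u : ℝ => (c + |u|) ^ (-p)) = fun u : ℝ => (fun x : ℝ => (c + x) ^ (-p)) |u| := rfl
    rw [h0, integral_comp_abs (f := fun x : ℝ => (c + x) ^ (-p))]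
    have hpre : (fun x : ℝ => c + x) ⁻¹' Ioi c = Ioi 0 := by
      ext x; simp
    have := (measurePreserving_add_left (volume : Measure ℝ) c).setIntegral_preimage_emb
      (measurableEmbedding_addLeft c) (fun y : ℝ => y ^ (-p)) (Ioi c)
    rw [hpre] at this
    rw [show (∫ x : ℝ in Ioi 0, (c + x) ^ (-p)) = ∫ x : ℝ in Ioi (0:ℝ), (fun y : ℝ => y ^ (-p)) (c + x) from rfl,
      this, integral_Ioi_rpow_of_lt (by linarith) hc]
    rw [show -c ^ (-p + 1) / (-p + 1) = c ^ (-p + 1) / (p - 1) by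
      rw [show -p + 1 = -(p - 1) by ring, div_neg, neg_div, neg_neg],
      show -p + 1 = 1 - p by ring]

lemma key_int_t (c p t : ℝ) (hc : 0 < c) (hp : 1 < p) :
    Integrable (fun u : ℝ => (c + |t - u|) ^ (-p)) ∧
    ∫ u : ℝ, (c + |t - u|) ^ (-p) = 2 * (c ^ (1 - p) / (p - 1)) := by
  obtain ⟨hi, he⟩ := key_int c p hc hp
  refine ⟨hi.comp_sub_left t, ?_⟩
  rw [show (fun u : ℝ => (c + |t - u|) ^ (-p))
        = fun u : ℝ => (fun v : ℝ => (c + |v|) ^ (-p)) (t - u) from rfl,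
    integral_sub_left_eq_self (fun v : ℝ => (c + |v|) ^ (-p)) volume t, he]

lemma rpow_neg_le (x y p : ℝ) (hx : 0 < x) (hxy : x ≤ y) (hp : 0 ≤ p) :
    y ^ (-p) ≤ x ^ (-p) := by
  rw [Real.rpow_neg (hx.trans_le hxy).le, Real.rpow_neg hx.le]
  exact inv_anti₀ (Real.rpow_pos_of_pos hx p) (Real.rpow_le_rpow hx.le hxy hp)

lemma rpow_prod_le (x y p q : ℝ) (hx : 0 ≤ x) (hy : 0 ≤ y) (hxy : 0 < x + y)
    (hp : 0 ≤ p) (hq : 0 ≤ q) : x ^ p * y ^ q ≤ (x + y) ^ (p + q) := by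
  rw [Real.rpow_add hxy]
  exact mul_le_mul (Real.rpow_le_rpow hx (by linarith) hp)
    (Real.rpow_le_rpow hy (by linarith) hq) (Real.rpow_nonneg hy q)
    (Real.rpow_nonneg hxy.le p)

lemma sq_rpow_half (A : ℝ) (hA : 0 ≤ A) : (A ^ 2) ^ ((1:ℝ)/2) = A := by
  rw [← Real.rpow_natCast A 2, ← Real.rpow_mul hA]
  norm_num

lemma sq_rpow (A e : ℝ) (hA : 0 ≤ A) : (A ^ 2) ^ e = A ^ (2 * e) := by
  rw [← Real.rpow_natCast A 2, ← Real.rpow_mul hA]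
  norm_num

set_option maxHeartbeats 2000000 in
theorem stmt14 (n : ℕ) (hn : 1 ≤ n) :
    ∃ C : ℝ, 0 < C ∧
      ∀ A B : ℝ, 0 < A → 0 < B → B ≤ A ^ 2 →
        ∀ (z : EuclideanSpace ℝ (Fin (2 * n))) (t : ℝ),
          (∫ u : ℝ,
              (A / (A ^ 2 + ‖z‖ ^ 2 + |t - u|) ^ ((n : ℝ) + 3 / 2)) *
                (B / (B + |u|) ^ 2)) ≤
            C * (A ^ ((1 : ℝ) / 2) / (A + ‖z‖) ^ (2 * (n : ℝ) + 1 / 2)) *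
              (A ^ ((1 : ℝ) / 2) / (A + |t| ^ ((1 : ℝ) / 2)) ^ ((5 : ℝ) / 2)) := by
  have hn1 : (1:ℝ) ≤ (n:ℝ) := by exact_mod_cast hn
  refine ⟨(2:ℝ) ^ ((n:ℝ) + 9), by positivity, ?_⟩
  intro A B hA hB hBA z t
  set C : ℝ := (2:ℝ) ^ ((n:ℝ) + 9) with hC
  set D : ℝ := A ^ 2 + ‖z‖ ^ 2 with hD
  set a : ℝ := (n:ℝ) + 3 / 2 with ha
  set s : ℝ := |t| with hs
  set R : ℝ := A + ‖z‖ with hR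
  set q : ℝ := 2 * (n:ℝ) + 1 / 2 with hq
  set W : ℝ := (A + s ^ ((1:ℝ)/2)) ^ ((5:ℝ)/2) with hW
  have hZ : (0:ℝ) ≤ ‖z‖ := norm_nonneg z
  have hDpos : 0 < D := by rw [hD]; positivity
  have hs0 : 0 ≤ s := abs_nonneg t
  have hRpos : 0 < R := by rw [hR]; positivity
  have ha1 : 1 < a := by rw [ha]; linarith
  have ha0 : 0 < a := by linarith
  have hWpos : 0 < W := by
    rw [hW]; apply Real.rpow_pos_of_pos; positivity
  have hqpos : 0 < q := by rw [hq]; linarith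
  have hRq : 0 < R ^ q := Real.rpow_pos_of_pos hRpos q
  -- RHS rewrite
  have hRHS : C * (A ^ ((1:ℝ)/2) / R ^ q) * (A ^ ((1:ℝ)/2) / W) = C * A / (R ^ q * W) := by
    rw [mul_assoc, div_mul_div_comm, ← Real.rpow_add hA]
    norm_num
    rw [mul_div_assoc]
  rw [hRHS]
  -- the two factor functions
  set F : ℝ → ℝ := fun u => A * (D + |t - u|) ^ (-a) with hF
  set G : ℝ → ℝ := fun u => B * (B + |u|) ^ (-(2:ℝ)) with hG
  have hFnn : ∀ u, 0 ≤ F u := by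
    intro u; rw [hF]; positivity
  have hGnn : ∀ u, 0 ≤ G u := by
    intro u; rw [hG]; positivity
  -- rewrite the integrand
  have hFG : ∀ u : ℝ, (A / (D + |t - u|) ^ a) * (B / (B + |u|) ^ 2) = F u * G u := by
    intro u
    have h1 : (0:ℝ) ≤ D + |t - u| := by positivity
    have h2 : (0:ℝ) ≤ B + |u| := by positivity
    simp only [hF, hG]
    rw [Real.rpow_neg h1, Real.rpow_neg h2,
      show ((2:ℝ)) = ((2:ℕ):ℝ) by norm_num, Real.rpow_natCast]
    ring
  simp only [hFG]
  -- integrability and integral values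
  obtain ⟨hFi0, hFv0⟩ := key_int_t D a t hDpos ha1
  obtain ⟨hGi0, hGv0⟩ := key_int B 2 hB one_lt_two
  have hFint : Integrable F := by rw [hF]; exact hFi0.const_mul A
  have hGint : Integrable G := by rw [hG]; exact hGi0.const_mul B
  have hGval : ∫ u : ℝ, G u = 2 := by
    rw [hG]
    rw [MeasureTheory.integral_const_mul, hGv0,
      show (1:ℝ) - 2 = -1 by norm_num, Real.rpow_neg_one]
    field_simp
    ring
  have hFval : ∫ u : ℝ, F u = A * (2 * (D ^ (1 - a) / (a - 1))) := by
    rw [hF, MeasureTheory.integral_const_mul, hFv0]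
  have hCpos : 0 < C := by rw [hC]; positivity
  have hDa : 0 < D ^ a := Real.rpow_pos_of_pos hDpos a
  rcases le_or_gt s (A ^ 2) with hcase | hcase
  · -- small t : s ≤ A^2
    have hsA : s ^ ((1:ℝ)/2) ≤ A := by
      have h := Real.rpow_le_rpow hs0 hcase (by norm_num : (0:ℝ) ≤ 1/2)
      rwa [sq_rpow_half A hA.le] at h
    have hWle : W ≤ 2 ^ ((5:ℝ)/2) * R ^ ((5:ℝ)/2) := by
      rw [hW]
      calc (A + s ^ ((1:ℝ)/2)) ^ ((5:ℝ)/2) ≤ (2 * R) ^ ((5:ℝ)/2) := by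
            apply Real.rpow_le_rpow (by positivity) (by rw [hR]; linarith) (by norm_num)
        _ = 2 ^ ((5:ℝ)/2) * R ^ ((5:ℝ)/2) := Real.mul_rpow (by norm_num) hRpos.le
    have hDge : R ^ (2*(n:ℝ)+3) / 2 ^ a ≤ D ^ a := by
      have h1 : R ^ 2 / 2 ≤ D := by rw [hR, hD]; nlinarith [sq_nonneg (A - ‖z‖)]
      have h2 : (2:ℝ)*(n:ℝ)+3 = 2*a := by rw [ha]; ring
      rw [h2, ← sq_rpow R a hRpos.le, ← Real.div_rpow (by positivity) (by norm_num : (0:ℝ) ≤ 2)]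
      exact Real.rpow_le_rpow (by positivity) h1 ha0.le
    have hptw : ∀ u, F u * G u ≤ (A * D ^ (-a)) * G u := by
      intro u
      apply mul_le_mul_of_nonneg_right _ (hGnn u)
      simp only [hF]
      apply mul_le_mul_of_nonneg_left _ hA.le
      exact rpow_neg_le D (D + |t - u|) a hDpos (le_add_of_nonneg_right (abs_nonneg _)) ha0.le
    have hIle : (∫ u : ℝ, F u * G u) ≤ (A * D ^ (-a)) * 2 := by
      calc (∫ u : ℝ, F u * G u) ≤ ∫ u : ℝ, (A * D ^ (-a)) * G u :=
            integral_mono_of_nonneg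
              (Filter.Eventually.of_forall fun u => mul_nonneg (hFnn u) (hGnn u))
              (hGint.const_mul _) (Filter.Eventually.of_forall hptw)
        _ = (A * D ^ (-a)) * ∫ u : ℝ, G u := MeasureTheory.integral_const_mul _ _
        _ = (A * D ^ (-a)) * 2 := by rw [hGval]
    refine hIle.trans ?_
    have hnum : (2:ℝ) * 2 ^ ((5:ℝ)/2) * 2 ^ a ≤ C := by
      rw [hC]
      calc (2:ℝ) * 2 ^ ((5:ℝ)/2) * 2 ^ a = 2 ^ (1:ℝ) * 2 ^ ((5:ℝ)/2) * 2 ^ a := by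
            norm_num
        _ = 2 ^ ((1:ℝ) + 5/2 + a) := by
            rw [← Real.rpow_add two_pos, ← Real.rpow_add two_pos]
        _ ≤ 2 ^ ((n:ℝ) + 9) := by
            apply Real.rpow_le_rpow_of_exponent_le one_le_two
            rw [ha]; linarith
    have key1 : 2 * A * (R ^ q * W) ≤ C * A * D ^ a := by
      calc 2 * A * (R ^ q * W) ≤ 2 * A * (R ^ q * (2 ^ ((5:ℝ)/2) * R ^ ((5:ℝ)/2))) := by
            gcongr
        _ = (2 * 2 ^ ((5:ℝ)/2)) * A * (R ^ q * R ^ ((5:ℝ)/2)) := by ring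
        _ = (2 * 2 ^ ((5:ℝ)/2)) * A * R ^ (q + (5:ℝ)/2) := by rw [← Real.rpow_add hRpos]
        _ = (2 * 2 ^ ((5:ℝ)/2)) * A * R ^ (2*(n:ℝ)+3) := by
            rw [show q + (5:ℝ)/2 = 2*(n:ℝ)+3 by rw [hq]; ring]
        _ = (2 * 2 ^ ((5:ℝ)/2) * 2 ^ a) * A * (R ^ (2*(n:ℝ)+3) / 2 ^ a) := by
            have h2a : (2:ℝ) ^ a ≠ 0 := by positivity
            field_simp
        _ ≤ C * A * (R ^ (2*(n:ℝ)+3) / 2 ^ a) := by gcongr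
        _ ≤ C * A * D ^ a := by gcongr
    rw [Real.rpow_neg hDpos.le, le_div_iff₀ (by positivity)]
    calc A * (D ^ a)⁻¹ * 2 * (R ^ q * W) = (2 * A * (R ^ q * W)) / D ^ a := by
          rw [div_eq_mul_inv]; ring
      _ ≤ (C * A * D ^ a) / D ^ a := by gcongr
      _ = C * A := by field_simp
  · -- large t : A^2 < s
    have hspos : (0:ℝ) < s := (by positivity : (0:ℝ) < A ^ 2).trans hcase
    have hAs : A ≤ s ^ ((1:ℝ)/2) := by
      have h := Real.rpow_le_rpow (by positivity) hcase.le (by norm_num : (0:ℝ) ≤ 1/2)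
      rwa [sq_rpow_half A hA.le] at h
    have hWle : W ≤ 2 ^ ((5:ℝ)/2) * s ^ ((5:ℝ)/4) := by
      have hsh : (s ^ ((1:ℝ)/2)) ^ ((5:ℝ)/2) = s ^ ((5:ℝ)/4) := by
        rw [← Real.rpow_mul hs0]; norm_num
      rw [hW, ← hsh]
      calc (A + s ^ ((1:ℝ)/2)) ^ ((5:ℝ)/2) ≤ (2 * s ^ ((1:ℝ)/2)) ^ ((5:ℝ)/2) := by
            apply Real.rpow_le_rpow (by positivity) (by linarith) (by norm_num)
        _ = 2 ^ ((5:ℝ)/2) * (s ^ ((1:ℝ)/2)) ^ ((5:ℝ)/2) :=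
            Real.mul_rpow (by norm_num) (by positivity)
    have hBle : B ≤ A ^ ((1:ℝ)/2) * s ^ ((3:ℝ)/4) := by
      have h1 : A ^ ((3:ℝ)/2) ≤ s ^ ((3:ℝ)/4) := by
        have h := Real.rpow_le_rpow (by positivity) hcase.le (by norm_num : (0:ℝ) ≤ 3/4)
        rwa [sq_rpow A ((3:ℝ)/4) hA.le, show (2:ℝ) * (3/4) = 3/2 by norm_num] at h
      calc B ≤ A ^ 2 := hBA
        _ = A ^ ((1:ℝ)/2) * A ^ ((3:ℝ)/2) := by
            rw [← Real.rpow_add hA, ← Real.rpow_natCast A 2]; norm_num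
        _ ≤ A ^ ((1:ℝ)/2) * s ^ ((3:ℝ)/4) := by gcongr
    have hDhalf : R ^ 2 / 2 ≤ D := by rw [hR, hD]; nlinarith [sq_nonneg (A - ‖z‖)]
    have hf4 : R ^ q * A ^ ((1:ℝ)/2) ≤ 2 ^ (a-1) * D ^ (a-1) := by
      have ha10 : (0:ℝ) ≤ a - 1 := by linarith
      have h2 : (R ^ 2 / 2 : ℝ) ^ (a-1) ≤ D ^ (a-1) :=
        Real.rpow_le_rpow (by positivity) hDhalf ha10
      have h3 : (R ^ 2 / 2 : ℝ) ^ (a-1) = R ^ (2*(a-1)) / 2 ^ (a-1) := by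
        rw [Real.div_rpow (by positivity) (by norm_num), sq_rpow R (a-1) hRpos.le]
      have h4 : R ^ (2*(a-1)) = R ^ q * R ^ ((1:ℝ)/2) := by
        rw [← Real.rpow_add hRpos, show q + (1:ℝ)/2 = 2*(a-1) by rw [hq, ha]; ring]
      have hRhalf : A ^ ((1:ℝ)/2) ≤ R ^ ((1:ℝ)/2) :=
        Real.rpow_le_rpow hA.le (by rw [hR]; linarith) (by norm_num)
      have h2a : (2:ℝ) ^ (a-1) ≠ 0 := by positivity
      calc R ^ q * A ^ ((1:ℝ)/2) ≤ R ^ q * R ^ ((1:ℝ)/2) := by gcongr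
        _ = 2 ^ (a-1) * ((R ^ 2 / 2) ^ (a-1)) := by rw [h3, h4]; field_simp
        _ ≤ 2 ^ (a-1) * D ^ (a-1) := by gcongr
    have hf5 : R ^ q * W ≤ 2 ^ ((n:ℝ)+4) * (D + s/2) ^ a := by
      have hsplit : D ^ ((n:ℝ)+1/4) * (s/2) ^ ((5:ℝ)/4) ≤ (D + s/2) ^ a := by
        have h := rpow_prod_le D (s/2) ((n:ℝ)+1/4) ((5:ℝ)/4) hDpos.le (by positivity)
          (by linarith) (by positivity) (by norm_num)
        rwa [show (n:ℝ)+1/4 + (5:ℝ)/4 = a by rw [ha]; ring] at h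
      have hD1 : R ^ q / 2 ^ ((n:ℝ)+1/4) ≤ D ^ ((n:ℝ)+1/4) := by
        have h2 := Real.rpow_le_rpow (by positivity) hDhalf
          (by positivity : (0:ℝ) ≤ (n:ℝ)+1/4)
        calc R ^ q / 2 ^ ((n:ℝ)+1/4) = (R ^ 2 / 2) ^ ((n:ℝ)+1/4) := by
              rw [Real.div_rpow (by positivity) (by norm_num), sq_rpow R _ hRpos.le,
                show (2:ℝ)*((n:ℝ)+1/4) = q by rw [hq]; ring]
          _ ≤ _ := h2
      have hs1 : W / 2 ^ ((15:ℝ)/4) ≤ (s/2) ^ ((5:ℝ)/4) := by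
        have e1 : (s/2 : ℝ) ^ ((5:ℝ)/4) = s ^ ((5:ℝ)/4) / 2 ^ ((5:ℝ)/4) := by
          rw [Real.div_rpow hs0 (by norm_num : (0:ℝ) ≤ 2)]
        rw [e1, div_le_div_iff₀ (by positivity) (by positivity)]
        calc W * 2 ^ ((5:ℝ)/4) ≤ (2 ^ ((5:ℝ)/2) * s ^ ((5:ℝ)/4)) * 2 ^ ((5:ℝ)/4) := by gcongr
          _ = s ^ ((5:ℝ)/4) * (2 ^ ((5:ℝ)/2) * 2 ^ ((5:ℝ)/4)) := by ring
          _ = s ^ ((5:ℝ)/4) * 2 ^ ((15:ℝ)/4) := by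
              rw [← Real.rpow_add two_pos]; norm_num
      have h21 : (2:ℝ) ^ ((n:ℝ)+1/4) ≠ 0 := by positivity
      have h22 : (2:ℝ) ^ ((15:ℝ)/4) ≠ 0 := by positivity
      calc R ^ q * W
          = 2 ^ ((n:ℝ)+1/4) * 2 ^ ((15:ℝ)/4)
            * ((R ^ q / 2 ^ ((n:ℝ)+1/4)) * (W / 2 ^ ((15:ℝ)/4))) := by
            field_simp
        _ ≤ 2 ^ ((n:ℝ)+1/4) * 2 ^ ((15:ℝ)/4) * (D ^ ((n:ℝ)+1/4) * (s/2) ^ ((5:ℝ)/4)) := by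
            gcongr
        _ ≤ 2 ^ ((n:ℝ)+1/4) * 2 ^ ((15:ℝ)/4) * (D + s/2) ^ a := by gcongr
        _ = 2 ^ ((n:ℝ)+4) * (D + s/2) ^ a := by
            rw [← Real.rpow_add two_pos, show (n:ℝ)+1/4+((15:ℝ)/4) = (n:ℝ)+4 by ring]
    set M1 : ℝ := A * (D + s/2) ^ (-a) with hM1
    set M2 : ℝ := B * (B + s/2) ^ (-(2:ℝ)) with hM2
    have hM1nn : 0 ≤ M1 := by rw [hM1]; positivity
    have hM2nn : 0 ≤ M2 := by rw [hM2]; positivity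
    have hptw : ∀ u, F u * G u ≤ M1 * G u + M2 * F u := by
      intro u
      rcases le_or_gt (|u|) (s/2) with h | h
      · have htu : s/2 ≤ |t - u| := by
          have h2 : s ≤ |t - u| + |u| := by
            rw [hs]
            calc |t| = |t - u + u| := by rw [sub_add_cancel]
              _ ≤ |t - u| + |u| := abs_add_le _ _
          linarith
        have hFle : F u ≤ M1 := by
          simp only [hF, hM1]
          apply mul_le_mul_of_nonneg_left _ hA.le
          exact rpow_neg_le (D + s/2) (D + |t - u|) a (by positivity) (by linarith) ha0.le
        calc F u * G u ≤ M1 * G u := mul_le_mul_of_nonneg_right hFle (hGnn u)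
          _ ≤ M1 * G u + M2 * F u := le_add_of_nonneg_right (mul_nonneg hM2nn (hFnn u))
      · have hGle : G u ≤ M2 := by
          simp only [hG, hM2]
          apply mul_le_mul_of_nonneg_left _ hB.le
          exact rpow_neg_le (B + s/2) (B + |u|) 2 (by positivity) (by linarith) (by norm_num)
        calc F u * G u ≤ F u * M2 := mul_le_mul_of_nonneg_left hGle (hFnn u)
          _ = M2 * F u := by ring
          _ ≤ M1 * G u + M2 * F u := le_add_of_nonneg_left (mul_nonneg hM1nn (hGnn u))
    have hIle : (∫ u : ℝ, F u * G u) ≤ M1 * 2 + M2 * (A * (2 * (D ^ (1-a) / (a-1)))) := by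
      calc (∫ u : ℝ, F u * G u) ≤ ∫ u : ℝ, (M1 * G u + M2 * F u) :=
            integral_mono_of_nonneg
              (Filter.Eventually.of_forall fun u => mul_nonneg (hFnn u) (hGnn u))
              ((hGint.const_mul M1).add (hFint.const_mul M2))
              (Filter.Eventually.of_forall hptw)
        _ = M1 * (∫ u : ℝ, G u) + M2 * ∫ u : ℝ, F u := by
            rw [integral_add (hGint.const_mul M1) (hFint.const_mul M2),
              MeasureTheory.integral_const_mul M1 G, MeasureTheory.integral_const_mul M2 F]
        _ = M1 * 2 + M2 * (A * (2 * (D ^ (1-a) / (a-1)))) := by rw [hGval, hFval]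
    refine hIle.trans ?_
    have hDsa : (0:ℝ) < (D + s/2) ^ a := Real.rpow_pos_of_pos (by linarith) a
    have half1 : M1 * 2 ≤ C/2 * A / (R ^ q * W) := by
      have hnum : (2:ℝ) * 2 ^ ((n:ℝ)+4) ≤ C/2 := by
        rw [hC, le_div_iff₀ two_pos]
        calc (2:ℝ) * 2 ^ ((n:ℝ)+4) * 2 = 2 ^ (1:ℝ) * 2 ^ ((n:ℝ)+4) * 2 ^ (1:ℝ) := by norm_num
          _ = 2 ^ ((1:ℝ) + ((n:ℝ)+4) + 1) := by
              rw [← Real.rpow_add two_pos, ← Real.rpow_add two_pos]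
          _ ≤ 2 ^ ((n:ℝ) + 9) :=
              Real.rpow_le_rpow_of_exponent_le one_le_two (by linarith)
      rw [hM1, Real.rpow_neg (by linarith), le_div_iff₀ (by positivity)]
      calc A * ((D + s/2) ^ a)⁻¹ * 2 * (R ^ q * W)
          = (2 * A * (R ^ q * W)) / (D + s/2) ^ a := by rw [div_eq_mul_inv]; ring
        _ ≤ (2 * A * (2 ^ ((n:ℝ)+4) * (D + s/2) ^ a)) / (D + s/2) ^ a := by gcongr
        _ = (2 * 2 ^ ((n:ℝ)+4)) * A := by field_simp
        _ ≤ (C/2) * A := by gcongr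
    have half2 : M2 * (A * (2 * (D ^ (1-a) / (a-1)))) ≤ C/2 * A / (R ^ q * W) := by
      have hstep : D ^ (1-a) / (a-1) ≤ D ^ (1-a) :=
        div_le_self (by positivity) (by rw [ha]; linarith)
      have hM2le : M2 ≤ B * (4 / s ^ 2) := by
        rw [hM2]
        have h1 : (B + s/2) ^ (-(2:ℝ)) ≤ (s/2) ^ (-(2:ℝ)) :=
          rpow_neg_le (s/2) (B + s/2) 2 (by positivity) (by linarith) (by norm_num)
        have h2 : ((s/2 : ℝ)) ^ (-(2:ℝ)) = 4 / s ^ 2 := by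
          rw [Real.rpow_neg (by positivity), show ((2:ℝ)) = ((2:ℕ):ℝ) by norm_num,
            Real.rpow_natCast, div_pow, inv_div]
          norm_num
        calc B * (B + s/2) ^ (-(2:ℝ)) ≤ B * (s/2) ^ (-(2:ℝ)) := by gcongr
          _ = B * (4 / s ^ 2) := by rw [h2]
      have hD1a : D ^ (1-a) = (D ^ (a-1))⁻¹ := by
        rw [show (1:ℝ)-a = -(a-1) by ring, Real.rpow_neg hDpos.le]
      have hDa1 : (0:ℝ) < D ^ (a-1) := Real.rpow_pos_of_pos hDpos _
      have hnum2 : 8 * 2 ^ ((5:ℝ)/2) ≤ C/(2 * 2 ^ (a-1)) := by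
        rw [hC, le_div_iff₀ (by positivity)]
        calc 8 * 2 ^ ((5:ℝ)/2) * (2 * 2 ^ (a-1))
            = (2:ℝ) ^ (3:ℝ) * 2 ^ ((5:ℝ)/2) * ((2:ℝ) ^ (1:ℝ) * 2 ^ (a-1)) := by norm_num
          _ = (2:ℝ) ^ ((3:ℝ) + 5/2 + (1 + (a-1))) := by
              rw [← Real.rpow_add two_pos, ← Real.rpow_add two_pos, ← Real.rpow_add two_pos]
          _ ≤ 2 ^ ((n:ℝ) + 9) :=
              Real.rpow_le_rpow_of_exponent_le one_le_two (by rw [ha]; linarith)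
      have hfrac : (R ^ q * A ^ ((1:ℝ)/2)) / 2 ^ (a-1) ≤ D ^ (a-1) := by
        rw [div_le_iff₀ (by positivity)]
        calc R ^ q * A ^ ((1:ℝ)/2) ≤ 2 ^ (a-1) * D ^ (a-1) := hf4
          _ = D ^ (a-1) * 2 ^ (a-1) := by ring
      have hEnn : 0 ≤ D ^ (1-a) / (a-1) :=
        div_nonneg (by positivity) (by rw [ha]; linarith)
      calc M2 * (A * (2 * (D ^ (1-a) / (a-1))))
          ≤ (B * (4 / s ^ 2)) * (A * (2 * D ^ (1-a))) := by
            apply mul_le_mul hM2le ?_ ?_ ?_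
            · gcongr
            · exact mul_nonneg hA.le (mul_nonneg (by norm_num) hEnn)
            · exact mul_nonneg hB.le (by positivity)
        _ = (8 * A * B) / (s ^ 2 * D ^ (a-1)) := by
            rw [hD1a, div_eq_mul_inv, div_eq_mul_inv, mul_inv]; ring
        _ ≤ (C/2 * A) / (R ^ q * W) := by
            rw [div_le_div_iff₀ (by positivity) (by positivity)]
            calc 8 * A * B * (R ^ q * W)
                ≤ 8 * A * (A ^ ((1:ℝ)/2) * s ^ ((3:ℝ)/4))
                  * (R ^ q * (2 ^ ((5:ℝ)/2) * s ^ ((5:ℝ)/4))) := by gcongr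
              _ = (8 * 2 ^ ((5:ℝ)/2)) * (A * A ^ ((1:ℝ)/2) * R ^ q)
                  * (s ^ ((3:ℝ)/4) * s ^ ((5:ℝ)/4)) := by ring
              _ = (8 * 2 ^ ((5:ℝ)/2)) * (A * A ^ ((1:ℝ)/2) * R ^ q) * s ^ 2 := by
                  rw [← Real.rpow_add hspos,
                    show (3:ℝ)/4 + (5:ℝ)/4 = ((2:ℕ):ℝ) by norm_num, Real.rpow_natCast]
              _ ≤ (C/(2 * 2 ^ (a-1))) * (A * A ^ ((1:ℝ)/2) * R ^ q) * s ^ 2 := by gcongr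
              _ = (C/2 * A) * (s ^ 2 * ((R ^ q * A ^ ((1:ℝ)/2)) / 2 ^ (a-1))) := by
                  field_simp
              _ ≤ (C/2 * A) * (s ^ 2 * D ^ (a-1)) := by gcongr
    have hsum : C/2 * A / (R ^ q * W) + C/2 * A / (R ^ q * W) = C * A / (R ^ q * W) := by
      rw [← add_div]; congr 1; ring
    linarith [half1, half2]
end
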